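/- arXiv:1205.6058 — 2 statements merged into one kernel-verified Lean document; each statement's English description precedes it below -/
import Mathlib

section
/- Let F̄_1 be the free As-bimodule generated by elements f_n of degree 1−n (n ≥ 1), with differential f_k ∂ = Σ_{r+2+t=k} (−1)^t (1^{⊗r}⊗m⊗1^{⊗t}) f_{k−1} + Σ_{i+j=k} (−1)^j (f_i ⊗ f_j) m. Then ∂² = 0. -/
/- A concrete model of the free `As`-bimodule `F̄₁ = As ⊙ k{f_n | n ≥ 1} ⊙ As`.
Its `k`-basis consists of the elements
`(m^{(a₁₁)} ⊗ ⋯ ⊗ m^{(a_{k,i_k})}) (f_{i₁} ⊗ ⋯ ⊗ f_{i_k}) m^{(k)}`,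
encoded as lists `L = [l₁, …, l_k]` of (nonempty) lists of (positive) arities: the `q`-th
inner list `l_q` records the arities of the `As`-factors feeding the `i_q = l_q.length`
inputs of `f_{i_q}`, and the bottom factor is `m^{(k)}`.  The generator `f_n` corresponds to
`List.replicate n [1]`, and `deg f_n = 1 - n`.  The differential
`f_k ∂ = Σ_{r+2+t=k} (−1)^t (1^{⊗r}⊗m⊗1^{⊗t}) f_{k−1} + Σ_{i+j=k} (−1)^j (f_i ⊗ f_j) m`
extends uniquely to a bimodule derivation `∂` of `F̄₁` (the `As`-coefficients compose:
top `m`'s merge arities, the inner right `m` merges into the bottom `m^{(k)}`, and the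
Koszul signs are recorded by the parities `deg f_i ≡ 1 + i`). -/

section Model

variable (k : Type*) [CommRing k]

/-- The underlying module of `F̄₁`: the free `k`-module on the set of basis trees. -/
abbrev FBar := (List (List ℕ)) →₀ k

/-- Valid basis elements: at least one `f`-factor, each `f`-factor has at least one input,
all arities positive. -/
def ValidB (L : List (List ℕ)) : Prop :=
  L ≠ [] ∧ ∀ l ∈ L, l ≠ [] ∧ ∀ a ∈ l, 1 ≤ a

/-- Merge the entries `r` and `r+1` of `l` (composition with `1^{⊗r}⊗m⊗1^{⊗t}` on top). -/
def mergeAt (l : List ℕ) (r : ℕ) : List ℕ :=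
  l.take r ++ [l.getD r 0 + l.getD (r + 1) 0] ++ l.drop (r + 2)

/-- Koszul parity picked up by `∂` acting on the `q`-th factor `f_{i_q}`: the degrees of the
later factors, `Σ_{r>q} (1 + i_r)`. -/
def epsExp (L : List (List ℕ)) (q : ℕ) : ℕ :=
  ∑ r ∈ Finset.Ico (q + 1) L.length, (1 + (L.getD r []).length)

/-- The value of the bimodule derivation `∂` on a basis element. -/
noncomputable def dGen (L : List (List ℕ)) : FBar k :=
  ∑ q ∈ Finset.range L.length,
    ((-1 : k) ^ epsExp L q) •
      ((∑ r ∈ Finset.range ((L.getD q []).length - 1),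
          ((-1 : k) ^ ((L.getD q []).length - 2 - r)) •
            Finsupp.single (L.set q (mergeAt (L.getD q []) r)) (1 : k))
        + ∑ a ∈ Finset.Ico 1 (L.getD q []).length,
            ((-1 : k) ^ ((L.getD q []).length - a)) •
              Finsupp.single
                (L.take q ++ [(L.getD q []).take a, (L.getD q []).drop a] ++ L.drop (q + 1))
                (1 : k))

/-- The differential `∂` of `F̄₁`. -/
noncomputable def dBar : FBar k →ₗ[k] FBar k :=
  Finsupp.lift (FBar k) k (List (List ℕ)) (dGen k)

end Model
section ProofAux

open Finset

variable {k : Type*} [CommRing k]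

/-! ### Sign helpers -/

lemma negOnePow_congr {a b : ℕ} (h : a % 2 = b % 2) : ((-1 : k) ^ a) = (-1) ^ b := by
  rw [← Nat.div_add_mod a 2, ← Nat.div_add_mod b 2, pow_add, pow_add, pow_mul, pow_mul]
  norm_num [h]

lemma negOnePow_add_eq_zero {a b : ℕ} (h : (a + b) % 2 = 1) :
    ((-1 : k) ^ a + (-1 : k) ^ b) = 0 := by
  have hb : b % 2 = (a + 1) % 2 := by omega
  rw [negOnePow_congr hb, pow_succ]
  ring

/-! ### mergeAt lemmas -/

lemma mergeAt_cons_succ (x : ℕ) (l : List ℕ) (r : ℕ) :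
    mergeAt (x :: l) (r + 1) = x :: mergeAt l r := by
  simp [mergeAt]

lemma mergeAt_cons_cons (x y : ℕ) (l : List ℕ) : mergeAt (x :: y :: l) 0 = (x + y) :: l := by
  simp [mergeAt]

lemma length_mergeAt (l : List ℕ) (r : ℕ) (h : r + 1 < l.length) :
    (mergeAt l r).length = l.length - 1 := by
  induction r generalizing l with
  | zero =>
    match l, h with
    | x :: y :: t, _ => simp [mergeAt_cons_cons]
  | succ r ih =>
    match l, h with
    | x :: l', h =>
      have h' : r + 1 < l'.length := by simpa using h
      simp [mergeAt_cons_succ, ih l' h']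
      omega

lemma take_mergeAt_lt {l : List ℕ} {r a : ℕ} (h : r < a) (h2 : r + 1 < l.length) :
    (mergeAt l r).take a = mergeAt (l.take (a + 1)) r := by
  induction r generalizing l a with
  | zero =>
    match l, h2 with
    | x :: y :: t, _ =>
      match a, h with
      | a' + 1, _ => simp [mergeAt_cons_cons]
  | succ r ih =>
    match l, h2 with
    | x :: l', h2 =>
      match a, h with
      | a' + 1, h =>
        have h' : r + 1 < l'.length := by simpa using h2
        simp [mergeAt_cons_succ, ih (by omega : r < a') h']

lemma drop_mergeAt_lt {l : List ℕ} {r a : ℕ} (h : r < a) (h2 : r + 1 < l.length) :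
    (mergeAt l r).drop a = l.drop (a + 1) := by
  induction r generalizing l a with
  | zero =>
    match l, h2 with
    | x :: y :: t, _ =>
      match a, h with
      | a' + 1, _ => simp [mergeAt_cons_cons]
  | succ r ih =>
    match l, h2 with
    | x :: l', h2 =>
      match a, h with
      | a' + 1, h =>
        have h' : r + 1 < l'.length := by simpa using h2
        simp [mergeAt_cons_succ, ih (by omega : r < a') h']

lemma take_mergeAt_ge {l : List ℕ} {r a : ℕ} (h : a ≤ r) (h2 : r + 1 < l.length) :
    (mergeAt l r).take a = l.take a := by
  induction a generalizing l r with
  | zero => simp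
  | succ a ih =>
    match r, h with
    | r' + 1, h =>
      match l, h2 with
      | x :: l', h2 =>
        have h' : r' + 1 < l'.length := by simpa using h2
        simp [mergeAt_cons_succ, ih (by omega : a ≤ r') h']

lemma drop_mergeAt_ge {l : List ℕ} {r a : ℕ} (h : a ≤ r) (h2 : r + 1 < l.length) :
    (mergeAt l r).drop a = mergeAt (l.drop a) (r - a) := by
  induction a generalizing l r with
  | zero => simp
  | succ a ih =>
    match r, h with
    | r' + 1, h =>
      match l, h2 with
      | x :: l', h2 =>
        have h' : r' + 1 < l'.length := by simpa using h2
        have : r' + 1 - (a + 1) = r' - a := by omega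
        simp [mergeAt_cons_succ, ih (by omega : a ≤ r') h', this]

lemma mergeAt_mergeAt {l : List ℕ} {r r' : ℕ} (h : r ≤ r') (h2 : r' + 2 < l.length) :
    mergeAt (mergeAt l (r' + 1)) r = mergeAt (mergeAt l r) r' := by
  induction r generalizing l r' with
  | zero =>
    match r' with
    | 0 =>
      match l, h2 with
      | x :: y :: z :: t, _ =>
        simp [mergeAt_cons_succ, mergeAt_cons_cons, add_assoc]
    | r'' + 1 =>
      match l, h2 with
      | x :: y :: l'', h2 =>
        simp only [mergeAt_cons_succ, mergeAt_cons_cons]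
  | succ r ih =>
    match r', h with
    | r₀' + 1, h =>
      match l, h2 with
      | x :: l', h2 =>
        have h' : r₀' + 2 < l'.length := by simp at h2; omega
        rw [show (r₀':ℕ) + 1 + 1 = (r₀' + 1) + 1 from rfl, mergeAt_cons_succ,
          mergeAt_cons_succ, mergeAt_cons_succ, mergeAt_cons_succ,
          ih (by omega : r ≤ r₀') h']

end ProofAux
section ProofAux2

open Finset

variable {k : Type*} [CommRing k]

/-! ### degree sums -/

/-- Total (homological parity) degree exponent of a monomial. -/
def eSum (L : List (List ℕ)) : ℕ := (L.map fun l => 1 + l.length).sum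

@[simp] lemma eSum_nil : eSum ([] : List (List ℕ)) = 0 := rfl

@[simp] lemma eSum_cons (l : List ℕ) (L : List (List ℕ)) :
    eSum (l :: L) = 1 + l.length + eSum L := by simp [eSum]

lemma eSum_append (L₁ L₂ : List (List ℕ)) : eSum (L₁ ++ L₂) = eSum L₁ + eSum L₂ := by
  simp [eSum]

lemma eSum_eq (L : List (List ℕ)) :
    eSum L = ∑ r ∈ Finset.range L.length, (1 + (L.getD r []).length) := by
  induction L with
  | nil => simp
  | cons l L ih => rw [List.length_cons, Finset.sum_range_succ']; simp [ih]; omega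

lemma getD_drop (L : List (List ℕ)) (m r : ℕ) :
    (L.drop m).getD r [] = L.getD (m + r) [] := by
  simp [List.getD_eq_getElem?_getD, List.getElem?_drop]

lemma epsExp_eq (L : List (List ℕ)) (q : ℕ) : epsExp L q = eSum (L.drop (q + 1)) := by
  rw [epsExp, eSum_eq, Finset.sum_Ico_eq_sum_range, List.length_drop]
  exact Finset.sum_congr rfl fun r _ => by rw [getD_drop]

lemma epsExp_append_left (L₁ L₂ : List (List ℕ)) {q : ℕ} (h : q < L₁.length) :
    epsExp (L₁ ++ L₂) q = epsExp L₁ q + eSum L₂ := by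
  rw [epsExp_eq, epsExp_eq, List.drop_append_of_le_length (by omega), eSum_append]

lemma epsExp_append_right (L₁ L₂ : List (List ℕ)) (q : ℕ) :
    epsExp (L₁ ++ L₂) (L₁.length + q) = epsExp L₂ q := by
  rw [epsExp_eq, epsExp_eq, show L₁.length + q + 1 = L₁.length + (q + 1) by omega,
    List.drop_length_add_append]

lemma eSum_set (L : List (List ℕ)) {q : ℕ} (x : List ℕ) (h : q < L.length) :
    eSum (L.set q x) + (L.getD q []).length = eSum L + x.length := by
  induction L generalizing q with
  | nil => simp at h
  | cons l L ih =>
    cases q with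
    | zero => simp; omega
    | succ q =>
      have := ih (by simpa using h)
      simp only [List.set_cons_succ, eSum_cons, List.getD_cons_succ]
      omega

lemma take_getD_drop (L : List (List ℕ)) {q : ℕ} (h : q < L.length) :
    L.take q ++ [L.getD q []] ++ L.drop (q + 1) = L := by
  induction L generalizing q with
  | nil => simp at h
  | cons l L ih =>
    cases q with
    | zero => simp
    | succ q => simpa using ih (by simpa using h)

/-! ### dBar basics -/

lemma dBar_apply (x : FBar k) : dBar k x = x.sum fun N c => c • dGen k N :=
  Finsupp.lift_apply _ _ _ _ _

lemma dBar_single (L : List (List ℕ)) : dBar k (Finsupp.single L (1 : k)) = dGen k L := by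
  rw [dBar_apply, Finsupp.sum_single_index (by simp), one_smul]

/-! ### parity of dGen -/

lemma dGen_support_parity (L : List (List ℕ)) :
    ∀ N ∈ (dGen k L).support, eSum N % 2 = (eSum L + 1) % 2 := by
  classical
  intro N hN
  rw [dGen] at hN
  obtain ⟨q, hq, hN⟩ := Finset.mem_biUnion.mp (Finsupp.support_finset_sum hN)
  rw [Finset.mem_range] at hq
  have hN := Finsupp.support_add (Finsupp.support_smul hN)
  rw [Finset.mem_union] at hN
  rcases hN with hN | hN
  · -- merge term
    obtain ⟨r, hr, hN⟩ := Finset.mem_biUnion.mp (Finsupp.support_finset_sum hN)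
    rw [Finset.mem_range] at hr
    have hN := Finsupp.support_single_subset (Finsupp.support_smul hN)
    rw [Finset.mem_singleton] at hN
    subst hN
    have hlen : (mergeAt (L.getD q []) r).length = (L.getD q []).length - 1 :=
      length_mergeAt _ _ (by omega)
    have := eSum_set L (mergeAt (L.getD q []) r) hq
    rw [hlen] at this
    omega
  · -- split term
    obtain ⟨a, ha, hN⟩ := Finset.mem_biUnion.mp (Finsupp.support_finset_sum hN)
    rw [Finset.mem_Ico] at ha
    have hN := Finsupp.support_single_subset (Finsupp.support_smul hN)
    rw [Finset.mem_singleton] at hN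
    subst hN
    have hL : eSum L = eSum (L.take q) + (1 + (L.getD q []).length) + eSum (L.drop (q+1)) := by
      conv_lhs => rw [← take_getD_drop L hq]
      simp [eSum_append]
      omega
    rw [eSum_append, eSum_append]
    simp only [eSum_cons, eSum_nil, List.length_take, List.length_drop]
    omega

end ProofAux2
section ProofAux3

open Finset

variable {k : Type*} [CommRing k]

/-! ### Leibniz rule for `dGen` -/

lemma dGen_append (L₁ L₂ : List (List ℕ)) :
    dGen k (L₁ ++ L₂) =
      ((-1 : k) ^ eSum L₂) • Finsupp.mapDomain (· ++ L₂) (dGen k L₁)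
        + Finsupp.mapDomain (L₁ ++ ·) (dGen k L₂) := by
  rw [dGen, dGen, dGen, List.length_append, Finset.sum_range_add]
  rw [Finsupp.mapDomain_finset_sum, Finsupp.mapDomain_finset_sum, Finset.smul_sum]
  congr 1
  · refine Finset.sum_congr rfl fun q hq => ?_
    rw [Finset.mem_range] at hq
    have hgd : (L₁ ++ L₂).getD q [] = L₁.getD q [] := List.getD_append _ _ _ _ hq
    rw [hgd, epsExp_append_left _ _ hq, pow_add,
      mul_comm ((-1 : k) ^ epsExp L₁ q) ((-1 : k) ^ eSum L₂), ← smul_smul]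
    rw [Finsupp.mapDomain_smul, Finsupp.mapDomain_add, Finsupp.mapDomain_finset_sum,
      Finsupp.mapDomain_finset_sum]
    refine congrArg (fun z => ((-1 : k) ^ eSum L₂) • ((-1 : k) ^ epsExp L₁ q) • z) ?_
    refine congrArg₂ (· + ·) ?_ ?_
    · refine Finset.sum_congr rfl fun r _ => ?_
      rw [Finsupp.mapDomain_smul, Finsupp.mapDomain_single, List.set_append_left _ _ hq]
    · refine Finset.sum_congr rfl fun a _ => ?_
      rw [Finsupp.mapDomain_smul, Finsupp.mapDomain_single,
        List.take_append_of_le_length (by omega), List.drop_append_of_le_length (by omega)]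
      simp [List.append_assoc]
  · refine Finset.sum_congr rfl fun q _ => ?_
    have hgd : (L₁ ++ L₂).getD (L₁.length + q) [] = L₂.getD q [] := by
      rw [List.getD_append_right _ _ _ _ (by omega)]
      simp
    rw [hgd, epsExp_append_right]
    rw [Finsupp.mapDomain_smul, Finsupp.mapDomain_add, Finsupp.mapDomain_finset_sum,
      Finsupp.mapDomain_finset_sum]
    refine congrArg (fun z => ((-1 : k) ^ epsExp L₂ q) • z) ?_
    refine congrArg₂ (· + ·) ?_ ?_
    · refine Finset.sum_congr rfl fun r _ => ?_
      rw [Finsupp.mapDomain_smul, Finsupp.mapDomain_single,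
        List.set_append_right _ _ (by omega : L₁.length ≤ L₁.length + q)]
      simp
    · refine Finset.sum_congr rfl fun a _ => ?_
      rw [Finsupp.mapDomain_smul, Finsupp.mapDomain_single]
      rw [show L₁.length + q + 1 = L₁.length + (q + 1) by omega, List.drop_length_add_append,
        List.take_length_add_append]
      simp [List.append_assoc]

/-! ### `dBar` on products -/

lemma dBar_mapDomain (x : FBar k) (f : List (List ℕ) → List (List ℕ)) :
    dBar k (Finsupp.mapDomain f x) = x.sum fun M c => c • dGen k (f M) := by
  rw [dBar_apply, Finsupp.sum_mapDomain_index (by simp) (fun b m₁ m₂ => add_smul m₁ m₂ _)]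

lemma mapDomain_dBar (x : FBar k) (f : List (List ℕ) → List (List ℕ)) :
    (x.sum fun M c => c • Finsupp.mapDomain f (dGen k M)) = Finsupp.mapDomain f (dBar k x) := by
  rw [dBar_apply, Finsupp.sum, Finsupp.sum, Finsupp.mapDomain_finset_sum]
  exact Finset.sum_congr rfl fun M _ => (Finsupp.mapDomain_smul _ _).symm

lemma sum_mapDomain_comm (x y : FBar k) :
    (x.sum fun M c => c • Finsupp.mapDomain (fun N => M ++ N) y)
      = y.sum fun N c => c • Finsupp.mapDomain (fun M => M ++ N) x := by
  simp only [Finsupp.mapDomain, Finsupp.smul_sum, Finsupp.smul_single, smul_eq_mul]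
  rw [Finsupp.sum_comm]
  exact Finsupp.sum_congr fun N _ => Finsupp.sum_congr fun M _ => by rw [mul_comm]

lemma dBar_rmul (x : FBar k) (L₂ : List (List ℕ)) :
    dBar k (Finsupp.mapDomain (· ++ L₂) x)
      = ((-1 : k) ^ eSum L₂) • Finsupp.mapDomain (· ++ L₂) (dBar k x)
        + x.sum fun M c => c • Finsupp.mapDomain (fun N => M ++ N) (dGen k L₂) := by
  rw [dBar_mapDomain]
  rw [show (fun M (c : k) => c • dGen k (M ++ L₂))
      = fun M (c : k) => (((-1 : k) ^ eSum L₂) • (c • Finsupp.mapDomain (· ++ L₂) (dGen k M))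
          + c • Finsupp.mapDomain (fun N => M ++ N) (dGen k L₂)) from
    funext fun M => funext fun c => by rw [dGen_append, smul_add, smul_comm]]
  rw [Finsupp.sum_add, ← Finsupp.smul_sum, mapDomain_dBar]

lemma dBar_lmul (L₁ L₂ : List (List ℕ)) :
    dBar k (Finsupp.mapDomain (fun N => L₁ ++ N) (dGen k L₂))
      = (-((-1 : k) ^ eSum L₂)) •
          ((dGen k L₂).sum fun N c => c • Finsupp.mapDomain (fun M => M ++ N) (dGen k L₁))
        + Finsupp.mapDomain (fun N => L₁ ++ N) (dBar k (dGen k L₂)) := by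
  rw [dBar_mapDomain]
  rw [Finsupp.sum_congr (g2 := fun N (c : k) =>
      ((-((-1 : k) ^ eSum L₂)) • (c • Finsupp.mapDomain (fun M => M ++ N) (dGen k L₁))
        + c • Finsupp.mapDomain (fun N' => L₁ ++ N') (dGen k N)))
    (fun N hN => by
      rw [dGen_append L₁ N, negOnePow_congr (dGen_support_parity L₂ N hN), pow_succ,
        smul_add, smul_comm]
      congr 2
      ring)]
  rw [Finsupp.sum_add, ← Finsupp.smul_sum, mapDomain_dBar]

lemma dd_append (L₁ L₂ : List (List ℕ)) (h₁ : dBar k (dGen k L₁) = 0)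
    (h₂ : dBar k (dGen k L₂) = 0) : dBar k (dGen k (L₁ ++ L₂)) = 0 := by
  rw [dGen_append, map_add, map_smul, dBar_rmul, dBar_lmul, h₁, h₂]
  simp only [Finsupp.mapDomain_zero, smul_zero, zero_add, add_zero]
  rw [sum_mapDomain_comm, neg_smul]
  exact add_neg_cancel _

end ProofAux3
section ProofAux4

open Finset

variable {k : Type*} [CommRing k]

lemma dGen_one (l : List ℕ) :
    dGen k [l] =
      (∑ r ∈ range (l.length - 1),
          ((-1 : k) ^ (l.length - 2 - r)) • Finsupp.single [mergeAt l r] (1 : k))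
        + ∑ a ∈ Ico 1 l.length,
            ((-1 : k) ^ (l.length - a)) • Finsupp.single [l.take a, l.drop a] (1 : k) := by
  rw [dGen]
  simp [epsExp]

lemma dGen_pair (u v : List ℕ) :
    dGen k [u, v] =
      ((-1 : k) ^ (1 + v.length)) •
        ((∑ r ∈ range (u.length - 1),
            ((-1 : k) ^ (u.length - 2 - r)) • Finsupp.single [mergeAt u r, v] (1 : k))
          + ∑ b ∈ Ico 1 u.length,
              ((-1 : k) ^ (u.length - b)) • Finsupp.single [u.take b, u.drop b, v] (1 : k))
      + ((∑ r ∈ range (v.length - 1),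
            ((-1 : k) ^ (v.length - 2 - r)) • Finsupp.single [u, mergeAt v r] (1 : k))
          + ∑ b ∈ Ico 1 v.length,
              ((-1 : k) ^ (v.length - b)) • Finsupp.single [u, v.take b, v.drop b] (1 : k)) := by
  rw [dGen]
  simp [epsExp, Finset.sum_range_succ]

end ProofAux4
section ProofAux5

open Finset

variable {k : Type*} [CommRing k]

lemma cancel_MM (l : List ℕ) :
    ∑ p ∈ (range (l.length - 1)).sigma (fun _ => range (l.length - 1 - 1)),
      ((-1 : k) ^ (l.length - 2 - p.1 + (l.length - 1 - 2 - p.2))) •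
        Finsupp.single [mergeAt (mergeAt l p.1) p.2] (1 : k) = 0 := by
  refine Finset.sum_involution
    (fun p _ => if p.2 < p.1 then ⟨p.2, p.1 - 1⟩ else ⟨p.2 + 1, p.1⟩) ?_ ?_ ?_ ?_
  · intro p hp
    rw [Finset.mem_sigma, Finset.mem_range, Finset.mem_range] at hp
    obtain ⟨h1, h2⟩ := hp
    by_cases h : p.2 < p.1
    · simp only [h, if_true]
      have hv : mergeAt (mergeAt l p.1) p.2 = mergeAt (mergeAt l p.2) (p.1 - 1) := by
        have := mergeAt_mergeAt (l := l) (r := p.2) (r' := p.1 - 1) (by omega) (by omega)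
        rwa [show p.1 - 1 + 1 = p.1 by omega] at this
      rw [hv, ← add_smul, negOnePow_add_eq_zero (by omega), zero_smul]
    · simp only [h, if_false]
      have hv : mergeAt (mergeAt l (p.2 + 1)) p.1 = mergeAt (mergeAt l p.1) p.2 :=
        mergeAt_mergeAt (by omega) (by omega)
      rw [hv, ← add_smul, negOnePow_add_eq_zero (by omega), zero_smul]
  · intro p hp _
    by_cases h : p.2 < p.1 <;> simp [h, Sigma.ext_iff] <;> omega
  · intro p hp
    rw [Finset.mem_sigma, Finset.mem_range, Finset.mem_range] at hp
    obtain ⟨h1, h2⟩ := hp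
    by_cases h : p.2 < p.1 <;>
      simp only [h, if_true, if_false, Finset.mem_sigma, Finset.mem_range] <;>
      exact ⟨by omega, by omega⟩
  · intro p hp
    rw [Finset.mem_sigma, Finset.mem_range, Finset.mem_range] at hp
    by_cases h : p.2 < p.1
    · have : ¬ (p.1 - 1 < p.2) := by omega
      simp [h, this, Sigma.ext_iff]
      omega
    · have : p.1 < p.2 + 1 := by omega
      simp [h, this, Sigma.ext_iff]

end ProofAux5
section ProofAux6

open Finset

variable {k : Type*} [CommRing k]

lemma cancel_SS (l : List ℕ) :
    (∑ p ∈ (Finset.Ico 1 l.length).sigma (fun a => Finset.Ico 1 a),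
      ((-1 : k) ^ (l.length - p.1 + (1 + (l.length - p.1)) + (p.1 - p.2))) •
        Finsupp.single [(l.take p.1).take p.2, (l.take p.1).drop p.2, l.drop p.1] (1 : k))
    + ∑ p ∈ (Finset.Ico 1 l.length).sigma (fun a => Finset.Ico 1 (l.length - a)),
      ((-1 : k) ^ (l.length - p.1 + (l.length - p.1 - p.2))) •
        Finsupp.single [l.take p.1, (l.drop p.1).take p.2, (l.drop p.1).drop p.2] (1 : k)
    = 0 := by
  have hswap :
      (∑ p ∈ (Finset.Ico 1 l.length).sigma (fun a => Finset.Ico 1 (l.length - a)),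
        ((-1 : k) ^ (l.length - p.1 + (l.length - p.1 - p.2))) •
          Finsupp.single [l.take p.1, (l.drop p.1).take p.2, (l.drop p.1).drop p.2] (1 : k))
      = ∑ p ∈ (Finset.Ico 1 l.length).sigma (fun a => Finset.Ico 1 a),
        ((-1 : k) ^ (l.length - p.2 + (l.length - p.2 - (p.1 - p.2)))) •
          Finsupp.single [l.take p.2, (l.drop p.2).take (p.1 - p.2),
            (l.drop p.2).drop (p.1 - p.2)] (1 : k) := by
    refine Finset.sum_nbij' (fun p => ⟨p.1 + p.2, p.1⟩) (fun p => ⟨p.2, p.1 - p.2⟩)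
      ?_ ?_ ?_ ?_ ?_
    · intro p hp
      rw [Finset.mem_sigma, Finset.mem_Ico, Finset.mem_Ico] at hp
      simp only [Finset.mem_sigma, Finset.mem_Ico]
      exact ⟨⟨by omega, by omega⟩, by omega, by omega⟩
    · intro p hp
      rw [Finset.mem_sigma, Finset.mem_Ico, Finset.mem_Ico] at hp
      simp only [Finset.mem_sigma, Finset.mem_Ico]
      exact ⟨⟨by omega, by omega⟩, by omega, by omega⟩
    · intro p hp
      simp [Sigma.ext_iff]
    · intro p hp
      rw [Finset.mem_sigma, Finset.mem_Ico, Finset.mem_Ico] at hp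
      simp [Sigma.ext_iff]
      omega
    · intro p hp
      rw [Finset.mem_sigma, Finset.mem_Ico, Finset.mem_Ico] at hp
      dsimp only
      rw [show p.1 + p.2 - p.1 = p.2 by omega]
  rw [hswap, ← Finset.sum_add_distrib]
  refine Finset.sum_eq_zero fun p hp => ?_
  rw [Finset.mem_sigma, Finset.mem_Ico, Finset.mem_Ico] at hp
  obtain ⟨⟨ha1, ha2⟩, hb1, hb2⟩ := hp
  have hv : [(l.take p.1).take p.2, (l.take p.1).drop p.2, l.drop p.1]
      = [l.take p.2, (l.drop p.2).take (p.1 - p.2), (l.drop p.2).drop (p.1 - p.2)] := by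
    rw [List.take_take, min_eq_left (by omega), List.drop_take, List.drop_drop,
      show p.2 + (p.1 - p.2) = p.1 by omega]
  rw [hv, ← add_smul, negOnePow_add_eq_zero (by omega), zero_smul]

end ProofAux6
section ProofAux7

open Finset

variable {k : Type*} [CommRing k]

lemma cancel_MS (l : List ℕ) :
    (∑ p ∈ (range (l.length - 1)).sigma (fun _ => Finset.Ico 1 (l.length - 1)),
      ((-1 : k) ^ (l.length - 2 - p.1 + (l.length - 1 - p.2))) •
        Finsupp.single [(mergeAt l p.1).take p.2, (mergeAt l p.1).drop p.2] (1 : k))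
    + (∑ p ∈ (Finset.Ico 1 l.length).sigma (fun a => range (a - 1)),
      ((-1 : k) ^ (l.length - p.1 + (1 + (l.length - p.1)) + (p.1 - 2 - p.2))) •
        Finsupp.single [mergeAt (l.take p.1) p.2, l.drop p.1] (1 : k))
    + (∑ p ∈ (Finset.Ico 1 l.length).sigma (fun a => range (l.length - a - 1)),
      ((-1 : k) ^ (l.length - p.1 + (l.length - p.1 - 2 - p.2))) •
        Finsupp.single [l.take p.1, mergeAt (l.drop p.1) p.2] (1 : k)) = 0 := by
  classical
  set S := (range (l.length - 1)).sigma (fun _ => Finset.Ico 1 (l.length - 1)) with hS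
  have h0 : (∑ p ∈ S.filter (fun p => p.1 < p.2),
        ((-1 : k) ^ (l.length - 2 - p.1 + (l.length - 1 - p.2))) •
          Finsupp.single [(mergeAt l p.1).take p.2, (mergeAt l p.1).drop p.2] (1 : k))
      + (∑ p ∈ (Finset.Ico 1 l.length).sigma (fun a => range (a - 1)),
        ((-1 : k) ^ (l.length - p.1 + (1 + (l.length - p.1)) + (p.1 - 2 - p.2))) •
          Finsupp.single [mergeAt (l.take p.1) p.2, l.drop p.1] (1 : k)) = 0 := by
    have hswap : (∑ p ∈ (Finset.Ico 1 l.length).sigma (fun a => range (a - 1)),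
          ((-1 : k) ^ (l.length - p.1 + (1 + (l.length - p.1)) + (p.1 - 2 - p.2))) •
            Finsupp.single [mergeAt (l.take p.1) p.2, l.drop p.1] (1 : k))
        = ∑ p ∈ S.filter (fun p => p.1 < p.2),
          ((-1 : k) ^ (l.length - (p.2 + 1) + (1 + (l.length - (p.2 + 1)))
              + (p.2 + 1 - 2 - p.1))) •
            Finsupp.single [mergeAt (l.take (p.2 + 1)) p.1, l.drop (p.2 + 1)] (1 : k) := by
      refine Finset.sum_nbij' (fun p => ⟨p.2, p.1 - 1⟩) (fun p => ⟨p.2 + 1, p.1⟩) ?_ ?_ ?_ ?_ ?_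
      · intro p hp
        rw [Finset.mem_sigma, Finset.mem_Ico, Finset.mem_range] at hp
        simp only [hS, Finset.mem_filter, Finset.mem_sigma, Finset.mem_range, Finset.mem_Ico]
        refine ⟨⟨?_, ?_, ?_⟩, ?_⟩ <;> omega
      · intro p hp
        simp only [hS, Finset.mem_filter, Finset.mem_sigma, Finset.mem_range,
          Finset.mem_Ico] at hp
        simp only [Finset.mem_sigma, Finset.mem_Ico, Finset.mem_range]
        refine ⟨⟨?_, ?_⟩, ?_⟩ <;> omega
      · intro p hp
        rw [Finset.mem_sigma, Finset.mem_Ico, Finset.mem_range] at hp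
        dsimp only
        rw [show p.1 - 1 + 1 = p.1 by omega]
      · intro p hp
        rfl
      · intro p hp
        rw [Finset.mem_sigma, Finset.mem_Ico, Finset.mem_range] at hp
        dsimp only
        rw [show p.1 - 1 + 1 = p.1 by omega]
    rw [hswap, ← Finset.sum_add_distrib]
    refine Finset.sum_eq_zero fun p hp => ?_
    simp only [hS, Finset.mem_filter, Finset.mem_sigma, Finset.mem_range, Finset.mem_Ico] at hp
    obtain ⟨⟨h1, h2, h3⟩, h4⟩ := hp
    have hv : ([(mergeAt l p.1).take p.2, (mergeAt l p.1).drop p.2] : List (List ℕ))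
        = [mergeAt (l.take (p.2 + 1)) p.1, l.drop (p.2 + 1)] := by
      rw [take_mergeAt_lt h4 (by omega), drop_mergeAt_lt h4 (by omega)]
    rw [hv, ← add_smul, negOnePow_add_eq_zero (by omega), zero_smul]
  have h1 : (∑ p ∈ S.filter (fun p => ¬ p.1 < p.2),
        ((-1 : k) ^ (l.length - 2 - p.1 + (l.length - 1 - p.2))) •
          Finsupp.single [(mergeAt l p.1).take p.2, (mergeAt l p.1).drop p.2] (1 : k))
      + (∑ p ∈ (Finset.Ico 1 l.length).sigma (fun a => range (l.length - a - 1)),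
        ((-1 : k) ^ (l.length - p.1 + (l.length - p.1 - 2 - p.2))) •
          Finsupp.single [l.take p.1, mergeAt (l.drop p.1) p.2] (1 : k)) = 0 := by
    have hswap : (∑ p ∈ (Finset.Ico 1 l.length).sigma (fun a => range (l.length - a - 1)),
          ((-1 : k) ^ (l.length - p.1 + (l.length - p.1 - 2 - p.2))) •
            Finsupp.single [l.take p.1, mergeAt (l.drop p.1) p.2] (1 : k))
        = ∑ p ∈ S.filter (fun p => ¬ p.1 < p.2),
          ((-1 : k) ^ (l.length - p.2 + (l.length - p.2 - 2 - (p.1 - p.2)))) •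
            Finsupp.single [l.take p.2, mergeAt (l.drop p.2) (p.1 - p.2)] (1 : k) := by
      refine Finset.sum_nbij' (fun p => ⟨p.1 + p.2, p.1⟩) (fun p => ⟨p.2, p.1 - p.2⟩) ?_ ?_ ?_ ?_ ?_
      · intro p hp
        rw [Finset.mem_sigma, Finset.mem_Ico, Finset.mem_range] at hp
        simp only [hS, Finset.mem_filter, Finset.mem_sigma, Finset.mem_range, Finset.mem_Ico]
        refine ⟨⟨?_, ?_, ?_⟩, ?_⟩ <;> omega
      · intro p hp
        simp only [hS, Finset.mem_filter, Finset.mem_sigma, Finset.mem_range,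
          Finset.mem_Ico] at hp
        simp only [Finset.mem_sigma, Finset.mem_Ico, Finset.mem_range]
        refine ⟨⟨?_, ?_⟩, ?_⟩ <;> omega
      · intro p hp
        rw [Finset.mem_sigma, Finset.mem_Ico, Finset.mem_range] at hp
        dsimp only
        rw [show p.1 + p.2 - p.1 = p.2 by omega]
      · intro p hp
        simp only [hS, Finset.mem_filter, Finset.mem_sigma, Finset.mem_range,
          Finset.mem_Ico, not_lt] at hp
        dsimp only
        rw [show p.2 + (p.1 - p.2) = p.1 by omega]
      · intro p hp
        rw [Finset.mem_sigma, Finset.mem_Ico, Finset.mem_range] at hp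
        dsimp only
        rw [show p.1 + p.2 - p.1 = p.2 by omega]
    rw [hswap, ← Finset.sum_add_distrib]
    refine Finset.sum_eq_zero fun p hp => ?_
    simp only [hS, Finset.mem_filter, Finset.mem_sigma, Finset.mem_range, Finset.mem_Ico] at hp
    obtain ⟨⟨h1, h2, h3⟩, h4⟩ := hp
    rw [not_lt] at h4
    have hv : ([(mergeAt l p.1).take p.2, (mergeAt l p.1).drop p.2] : List (List ℕ))
        = [l.take p.2, mergeAt (l.drop p.2) (p.1 - p.2)] := by
      rw [take_mergeAt_ge h4 (by omega), drop_mergeAt_ge h4 (by omega)]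
    rw [hv, ← add_smul, negOnePow_add_eq_zero (by omega), zero_smul]
  rw [← Finset.sum_filter_add_sum_filter_not S (fun p => p.1 < p.2)]
  have H := congrArg₂ HAdd.hAdd h0 h1
  rw [add_zero] at H
  rw [← H]
  abel

end ProofAux7
section ProofAux8

open Finset

variable {k : Type*} [CommRing k]

lemma dsq_one (l : List ℕ) : dBar k (dGen k [l]) = 0 := by
  rw [dGen_one, map_add, map_sum, map_sum]
  simp only [map_smul, dBar_single]
  have hM : ∀ r ∈ range (l.length - 1),
      ((-1 : k) ^ (l.length - 2 - r)) • dGen k [mergeAt l r]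
        = (∑ r' ∈ range (l.length - 1 - 1),
             ((-1 : k) ^ (l.length - 2 - r + (l.length - 1 - 2 - r'))) •
               Finsupp.single [mergeAt (mergeAt l r) r'] (1 : k))
          + ∑ a ∈ Ico 1 (l.length - 1),
              ((-1 : k) ^ (l.length - 2 - r + (l.length - 1 - a))) •
                Finsupp.single [(mergeAt l r).take a, (mergeAt l r).drop a] (1 : k) := by
    intro r hr
    rw [Finset.mem_range] at hr
    rw [dGen_one, length_mergeAt l r (by omega), smul_add, Finset.smul_sum, Finset.smul_sum]
    congr 1 <;> exact Finset.sum_congr rfl fun x _ => by rw [smul_smul, ← pow_add]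
  have hS : ∀ a ∈ Ico 1 l.length,
      ((-1 : k) ^ (l.length - a)) • dGen k [l.take a, l.drop a]
        = ((∑ r ∈ range (a - 1),
              ((-1 : k) ^ (l.length - a + (1 + (l.length - a)) + (a - 2 - r))) •
                Finsupp.single [mergeAt (l.take a) r, l.drop a] (1 : k))
            + ∑ b ∈ Ico 1 a,
                ((-1 : k) ^ (l.length - a + (1 + (l.length - a)) + (a - b))) •
                  Finsupp.single [(l.take a).take b, (l.take a).drop b, l.drop a] (1 : k))
          + ((∑ r ∈ range (l.length - a - 1),
              ((-1 : k) ^ (l.length - a + (l.length - a - 2 - r))) •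
                Finsupp.single [l.take a, mergeAt (l.drop a) r] (1 : k))
            + ∑ b ∈ Ico 1 (l.length - a),
                ((-1 : k) ^ (l.length - a + (l.length - a - b))) •
                  Finsupp.single [l.take a, (l.drop a).take b, (l.drop a).drop b] (1 : k)) := by
    intro a ha
    rw [Finset.mem_Ico] at ha
    rw [dGen_pair, List.length_take, List.length_drop, min_eq_left (by omega)]
    rw [smul_add]
    congr 1
    · rw [smul_smul, ← pow_add, smul_add, Finset.smul_sum, Finset.smul_sum]
      congr 1 <;> exact Finset.sum_congr rfl fun x _ => by rw [smul_smul, ← pow_add]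
    · rw [smul_add, Finset.smul_sum, Finset.smul_sum]
      congr 1 <;> exact Finset.sum_congr rfl fun x _ => by rw [smul_smul, ← pow_add]
  rw [Finset.sum_congr rfl hM, Finset.sum_congr rfl hS]
  simp only [Finset.sum_add_distrib]
  rw [Finset.sum_sigma' (range (l.length - 1)), Finset.sum_sigma' (range (l.length - 1)),
    Finset.sum_sigma' (Finset.Ico 1 l.length), Finset.sum_sigma' (Finset.Ico 1 l.length),
    Finset.sum_sigma' (Finset.Ico 1 l.length), Finset.sum_sigma' (Finset.Ico 1 l.length)]
  have H := congrArg₂ HAdd.hAdd (congrArg₂ HAdd.hAdd (cancel_MM (k := k) l)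
    (cancel_MS (k := k) l)) (cancel_SS (k := k) l)
  rw [add_zero, add_zero] at H
  rw [← H]
  abel

lemma dsq (L : List (List ℕ)) : dBar k (dGen k L) = 0 := by
  induction L with
  | nil =>
    rw [show dGen k ([] : List (List ℕ)) = 0 from by rw [dGen]; simp]
    simp
  | cons l L ih =>
    cases L with
    | nil => exact dsq_one l
    | cons l' L' => exact dd_append [l] (l' :: L') (dsq_one l) ih

end ProofAux8

/-- Let `F̄₁` be the free `As`-bimodule generated by elements `f_n` of degree `1−n`
(`n ≥ 1`), with differential
`f_k ∂ = Σ_{r+2+t=k} (−1)^t (1^{⊗r}⊗m⊗1^{⊗t}) f_{k−1} + Σ_{i+j=k} (−1)^j (f_i ⊗ f_j) m`,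
extended to `F̄₁` as a bimodule derivation.  Then `∂² = 0`. -/
theorem stmt_11 {k : Type*} [CommRing k] :
    ∀ L : List (List ℕ), ValidB L →
      dBar k (dBar k (Finsupp.single L (1 : k))) = 0 := by
  intro L _
  rw [dBar_single]
  exact dsq L
end

section
/- For a homotopy unital A_∞-morphism f : A → B, the element v^B = j^A f_1^+ − j^B of degree −1 satisfies v^B m_1^B = i^B − i^A f_1; therefore a homotopy unital A_∞-morphism between unital A_∞-algebras is unital (the cycles i^A f_1 and i^B differ by a boundary). -/
/- Operations and morphism components are encoded as functions `(ℕ → A) → B` of sequences of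
arguments (only the first `n` entries being relevant, cf. `Dep`).  Koszul signs are encoded
via parity involutions `σ` of the graded modules: the plain operator corresponding to a
Koszul-signed tensor product of maps applies suitable powers of `σ` to the arguments situated
after a map of odd degree. -/

section Defs

variable {A B : Type*} [AddCommGroup A] [AddCommGroup B]

/-- An operation depends only on its first `n` arguments. -/
def Dep (m : (n : ℕ) → (ℕ → A) → B) : Prop :=
  ∀ n (x y : ℕ → A), (∀ i < n, x i = y i) → m n x = m n y

/-- Extend a tuple `Fin l → ℕ` by zero to `ℕ → ℕ`. -/
def extC (l : ℕ) (c : Fin l → ℕ) : ℕ → ℕ := fun i => if h : i < l then c ⟨i, h⟩ else 0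

/-- Offset of the `q`-th block for block sizes `c`. -/
def blockOff (c : ℕ → ℕ) (q : ℕ) : ℕ := ∑ r ∈ Finset.range q, c r

/-- Koszul twist exponent for the `q`-th block of `f_{c 0} ⊗ ⋯ ⊗ f_{c (l-1)}`,
where `deg f_i = 1 - i`: the sum of the degrees of the preceding factors. -/
def blockTw (c : ℕ → ℕ) (q : ℕ) : ℕ := ∑ r ∈ Finset.range q, (1 + c r)

/-- The sign exponent `σ = Σ_q (q-1)(i_q - 1)` (blocks numbered from 1). -/
def compSign (c : ℕ → ℕ) (l : ℕ) : ℕ := ∑ q ∈ Finset.range l, q * (c q - 1)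

/-- The left-hand side `Σ (−1)^σ (f_{i₁}⊗…⊗f_{i_l}) m_l^B` of the `A_∞`-morphism relation,
as a plain operator (sum over all `l ≥ 0` and compositions `i₁+⋯+i_l = n`, `i_q ≥ 1`). -/
def morLHS (σA : A → A) (mB : (n : ℕ) → (ℕ → B) → B)
    (f : (n : ℕ) → (ℕ → A) → B) (n : ℕ) (x : ℕ → A) : B :=
  ∑ l ∈ Finset.range (n + 1),
    ∑ c ∈ Fintype.piFinset (fun _ : Fin l => Finset.range (n + 1)),
      if (∀ q, 1 ≤ c q) ∧ (∑ q, c q) = n then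
        ((-1 : ℤ) ^ compSign (extC l c) l) •
          mB l (fun q => f (extC l c q)
            (fun s => σA^[blockTw (extC l c) q] (x (blockOff (extC l c) q + s))))
      else 0

/-- The right-hand side `Σ (−1)^{t+rn} (1^{⊗r}⊗m_n^A⊗1^{⊗t}) f_{r+1+t}` of the
`A_∞`-morphism relation, as a plain operator. -/
def morRHS (σA : A → A) (mA : (n : ℕ) → (ℕ → A) → A)
    (f : (n : ℕ) → (ℕ → A) → B) (n : ℕ) (x : ℕ → A) : B :=
  ∑ r ∈ Finset.range (n + 1), ∑ p ∈ Finset.range (n + 1),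
    if 1 ≤ p ∧ r + p ≤ n then
      ((-1 : ℤ) ^ ((n - r - p) + r * p)) •
        f (r + 1 + (n - r - p)) (fun i =>
          if i < r then x i
          else if i = r then mA p (fun s => x (r + s))
          else σA^[p] (x (i + p - 1)))
    else 0

/-- The `A_∞`-morphism relation of arity `n` for `f : A → B`. -/
def MorRel (σA : A → A) (mA : (n : ℕ) → (ℕ → A) → A) (mB : (n : ℕ) → (ℕ → B) → B)
    (f : (n : ℕ) → (ℕ → A) → B) (n : ℕ) : Prop :=
  ∀ x : ℕ → A, morLHS σA mB f n x = morRHS σA mA f n x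

end Defs


set_option linter.unusedSectionVars false in
lemma morLHS_one' {A B : Type*} [AddCommGroup A] [AddCommGroup B]
    (σA : A → A) (mB : (n : ℕ) → (ℕ → B) → B)
    (f : (n : ℕ) → (ℕ → A) → B) (hdepB : Dep mB) (hdepf : Dep f) (x : ℕ → A) :
    morLHS σA mB f 1 x = mB 1 (fun _ => f 1 x) := by
  unfold morLHS
  rw [Finset.sum_range_succ, Finset.sum_range_one]
  have h0 : (∑ c ∈ Fintype.piFinset (fun _ : Fin 0 => Finset.range 2),
      if (∀ q, 1 ≤ c q) ∧ (∑ q, c q) = 1 then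
        ((-1 : ℤ) ^ compSign (extC 0 c) 0) •
          mB 0 (fun q => f (extC 0 c q)
            (fun s => σA^[blockTw (extC 0 c) q] (x (blockOff (extC 0 c) q + s))))
      else 0) = 0 := by
    simp
  rw [h0, zero_add]
  rw [Finset.sum_eq_single (fun _ : Fin 1 => 1)]
  · have hc : (∀ q : Fin 1, 1 ≤ (1:ℕ)) ∧ (∑ _q : Fin 1, (1:ℕ)) = 1 := by simp
    rw [if_pos hc]
    have hs : compSign (extC 1 (fun _ : Fin 1 => 1)) 1 = 0 := by
      simp [compSign]
    rw [hs, pow_zero, one_smul]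
    apply hdepB
    intro i hi
    interval_cases i
    have he : extC 1 (fun _ : Fin 1 => 1) 0 = 1 := by simp [extC]
    rw [he]
    have ht : blockTw (extC 1 (fun _ : Fin 1 => 1)) 0 = 0 := by simp [blockTw]
    have ho : blockOff (extC 1 (fun _ : Fin 1 => 1)) 0 = 0 := by simp [blockOff]
    rw [ht, ho]
    apply hdepf
    intro s _
    simp
  · intro c hc hne
    rw [if_neg]
    rintro ⟨h1, h2⟩
    apply hne
    funext q
    have hq : q = 0 := Subsingleton.elim _ _
    rw [hq]
    simpa [Fin.sum_univ_one] using h2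
  · intro h
    exact absurd (by simp : (fun _ : Fin 1 => 1) ∈
      Fintype.piFinset (fun _ : Fin 1 => Finset.range 2)) h

set_option linter.unusedSectionVars false in
lemma morRHS_one' {A B : Type*} [AddCommGroup A] [AddCommGroup B]
    (σA : A → A) (mA : (n : ℕ) → (ℕ → A) → A)
    (f : (n : ℕ) → (ℕ → A) → B) (hdepA : Dep mA) (hdepf : Dep f) (x : ℕ → A) :
    morRHS σA mA f 1 x = f 1 (fun _ => mA 1 x) := by
  unfold morRHS
  rw [Finset.sum_range_succ, Finset.sum_range_one]
  have h1 : (∑ p ∈ Finset.range 2,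
      if 1 ≤ p ∧ 1 + p ≤ 1 then
        ((-1 : ℤ) ^ ((1 - 1 - p) + 1 * p)) •
          f (1 + 1 + (1 - 1 - p)) (fun i =>
            if i < 1 then x i
            else if i = 1 then mA p (fun s => x (1 + s))
            else σA^[p] (x (i + p - 1)))
      else 0) = 0 := by
    apply Finset.sum_eq_zero
    intro p hp
    rw [if_neg]
    omega
  rw [h1, add_zero]
  rw [Finset.sum_range_succ, Finset.sum_range_one]
  rw [if_neg (by omega), if_pos (by omega), zero_add]
  norm_num
  apply hdepf
  intro i hi
  interval_cases i
  simp only [if_neg (lt_irrefl 0), if_pos rfl]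
  apply hdepA
  intro s _
  simp

/-- For a homotopy unital `A_∞`-morphism `f : A → B` — a strictly unital `A_∞`-morphism
`f⁺ : A⁺ = A ⊕ k·1ˢᵘ_A ⊕ k·j^A → B⁺ = B ⊕ k·1ˢᵘ_B ⊕ k·j^B` restricting to `f` on `A`, with
`v^B = j^A f_1⁺ − j^B ∈ B` and `(A ⊕ k·j)^{⊗n} f_n⁺ ⊆ B` for `n > 1` — the degree `-1`
element `v^B` satisfies `v^B m_1^B = i^B − i^A f_1`, where `i^A = 1ˢᵘ_A − j^A m_1^A` and
`i^B = 1ˢᵘ_B − j^B m_1^B` are the homotopy units.  Therefore a homotopy unital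
`A_∞`-morphism between unital `A_∞`-algebras is unital: the cycles `i^A f_1` and `i^B`
differ by a boundary. -/
theorem stmt_17 {k P Q : Type*} [CommRing k]
    [AddCommGroup P] [Module k P] [AddCommGroup Q] [Module k Q]
    (AA : Submodule k P) (BB : Submodule k Q)   -- `A ⊆ A⁺ = P`, `B ⊆ B⁺ = Q`
    (σP : P → P) (σQ : Q → Q)
    (mA : (n : ℕ) → (ℕ → P) → P) (mB : (n : ℕ) → (ℕ → Q) → Q)
    (f : (n : ℕ) → (ℕ → P) → Q)
    (hdepA : Dep mA) (hdepB : Dep mB) (hdepf : Dep f)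
    -- unary operations and `f_1` are additive:
    (haddB1 : ∀ a b : Q, mB 1 (fun _ => a - b) = mB 1 (fun _ => a) - mB 1 (fun _ => b))
    (haddf1 : ∀ a b : P, f 1 (fun _ => a - b) = f 1 (fun _ => a) - f 1 (fun _ => b))
    -- `f⁺` is an `A_∞`-morphism:
    (hmor : ∀ n, 1 ≤ n → MorRel σP mA mB f n)
    (eA jA : P) (eB jB : Q)      -- strict units `1ˢᵘ` and the elements `j`
    -- (1) `f⁺` is strictly unital:
    (hsu1 : f 1 (fun _ => eA) = eB)
    (hsu_hi : ∀ n, 2 ≤ n → ∀ (x : ℕ → P) (i : ℕ), i < n → x i = eA → f n x = 0)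
    -- (2) the element `v^B = j^A f_1⁺ − j^B` lies in `B`:
    (hv : f 1 (fun _ => jA) - jB ∈ BB)
    -- homotopy units lie in `A`, resp. `B`:
    (hiA : eA - mA 1 (fun _ => jA) ∈ AA) (hiB : eB - mB 1 (fun _ => jB) ∈ BB)
    -- (3) the restriction of `f⁺` to `A` gives `f`:
    (hclosA : ∀ n, 1 ≤ n → ∀ x : ℕ → P, (∀ i < n, x i ∈ AA) → f n x ∈ BB)
    -- (4) `(A ⊕ k·j)^{⊗n} f_n⁺ ⊆ B` for `n > 1`:
    (hclosAj : ∀ n, 2 ≤ n → ∀ x : ℕ → P,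
      (∀ i < n, ∃ a ∈ AA, ∃ t : k, x i = a + t • jA) → f n x ∈ BB) :
    mB 1 (fun _ => f 1 (fun _ => jA) - jB) =
      (eB - mB 1 (fun _ => jB)) - f 1 (fun _ => eA - mA 1 (fun _ => jA)) ∧
    ∃ w : Q, f 1 (fun _ => eA - mA 1 (fun _ => jA)) - (eB - mB 1 (fun _ => jB)) =
      mB 1 (fun _ => w) := by
  have key : ∀ x : ℕ → P, mB 1 (fun _ => f 1 x) = f 1 (fun _ => mA 1 x) := by
    intro x
    have h := hmor 1 le_rfl x
    rwa [morLHS_one' _ _ _ hdepB hdepf, morRHS_one' _ _ _ hdepA hdepf] at h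
  have hkey := key (fun _ => jA)
  have hf : f 1 (fun _ => eA - mA 1 (fun _ => jA)) =
      eB - mB 1 (fun _ => f 1 (fun _ => jA)) := by
    rw [haddf1, hsu1, ← hkey]
  constructor
  · rw [haddB1, hf]; abel
  · exact ⟨jB - f 1 (fun _ => jA), by rw [hf, haddB1]; abel⟩
end
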